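/- Let Λ, Ψ : [1,∞) → [1,∞) be increasing, differentiable functions with Λ(v) → ∞ and Ψ(v) → ∞ as v → ∞. Then the integral ∫₁^∞ Λ'(v) ln Ψ(v) / Λ(v)² dv converges if and only if the integral ∫₁^∞ Ψ'(v) / (Ψ(v) Λ(v)) dv converges. -/

import Mathlib

open MeasureTheory Filter Set

/-- Derivative of a function monotone on `Ici 1` is nonnegative at interior points. -/
lemma BR_aux_deriv_nonneg {f : ℝ → ℝ} (hf : MonotoneOn f (Set.Ici 1)) {x : ℝ}
    (hx : 1 < x) (hd : DifferentiableAt ℝ f x) : 0 ≤ deriv f x := by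
  have h1 : HasDerivWithinAt f (deriv f x) (Set.Ioi x) x :=
    hd.hasDerivAt.hasDerivWithinAt
  have h2 := (hasDerivWithinAt_iff_tendsto_slope' notMem_Ioi_self).mp h1
  refine ge_of_tendsto h2 ?_
  filter_upwards [self_mem_nhdsWithin] with y (hy : x < y)
  rw [slope_def_field]
  have hfle : f x ≤ f y := hf (le_of_lt hx) (le_of_lt (hx.trans hy)) hy.le
  have : (0:ℝ) < y - x := by linarith
  have : (0:ℝ) ≤ (f y - f x) / (y - x) := div_nonneg (by linarith) this.le
  simpa [div_eq_div_iff, sub_div] using this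

set_option maxHeartbeats 12000000 in
/-- equivalence of the two forms of the Λ-Brjuno-Rüssmann condition. -/
theorem BR_condition_equiv
    (Λ Ψ : ℝ → ℝ)
    (hΛmono : MonotoneOn Λ (Set.Ici 1)) (hΨmono : MonotoneOn Ψ (Set.Ici 1))
    (hΛdiff : ∀ v ∈ Set.Ici (1:ℝ), DifferentiableAt ℝ Λ v)
    (hΨdiff : ∀ v ∈ Set.Ici (1:ℝ), DifferentiableAt ℝ Ψ v)
    (hΛ1 : ∀ v : ℝ, 1 ≤ v → 1 ≤ Λ v) (hΨ1 : ∀ v : ℝ, 1 ≤ v → 1 ≤ Ψ v)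
    (hΛtop : Tendsto Λ atTop atTop) (hΨtop : Tendsto Ψ atTop atTop) :
    IntegrableOn (fun v => deriv Λ v * Real.log (Ψ v) / (Λ v) ^ 2) (Set.Ici 1)
      ↔ IntegrableOn (fun v => deriv Ψ v / (Ψ v * Λ v)) (Set.Ici 1) := by
  set f : ℝ → ℝ := fun v => deriv Λ v * Real.log (Ψ v) / (Λ v) ^ 2 with hf_def
  set g : ℝ → ℝ := fun v => deriv Ψ v / (Ψ v * Λ v) with hg_def
  set h : ℝ → ℝ := fun v => Real.log (Ψ v) / Λ v with hh_def
  -- basic positivity facts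
  have hΛpos : ∀ v : ℝ, 1 ≤ v → 0 < Λ v := fun v hv => lt_of_lt_of_le one_pos (hΛ1 v hv)
  have hΨpos : ∀ v : ℝ, 1 ≤ v → 0 < Ψ v := fun v hv => lt_of_lt_of_le one_pos (hΨ1 v hv)
  have hlogΨnn : ∀ v : ℝ, 1 ≤ v → 0 ≤ Real.log (Ψ v) := fun v hv =>
    Real.log_nonneg (hΨ1 v hv)
  have hΛcont : ContinuousOn Λ (Set.Ici 1) := fun v hv =>
    (hΛdiff v hv).continuousAt.continuousWithinAt
  have hΨcont : ContinuousOn Ψ (Set.Ici 1) := fun v hv =>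
    (hΨdiff v hv).continuousAt.continuousWithinAt
  have hΛ'nn : ∀ v : ℝ, 1 < v → 0 ≤ deriv Λ v := fun v hv =>
    BR_aux_deriv_nonneg hΛmono hv (hΛdiff v hv.le)
  have hΨ'nn : ∀ v : ℝ, 1 < v → 0 ≤ deriv Ψ v := fun v hv =>
    BR_aux_deriv_nonneg hΨmono hv (hΨdiff v hv.le)
  have hfnn : ∀ v : ℝ, 1 < v → 0 ≤ f v := fun v hv =>
    div_nonneg (mul_nonneg (hΛ'nn v hv) (hlogΨnn v hv.le)) (by positivity)
  have hgnn : ∀ v : ℝ, 1 < v → 0 ≤ g v := fun v hv =>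
    div_nonneg (hΨ'nn v hv) (le_of_lt (mul_pos (hΨpos v hv.le) (hΛpos v hv.le)))
  have hhnn : ∀ v : ℝ, 1 ≤ v → 0 ≤ h v := fun v hv =>
    div_nonneg (hlogΨnn v hv) (hΛpos v hv).le
  -- derivative of h
  have hhderiv : ∀ v : ℝ, 1 ≤ v → HasDerivAt h (g v - f v) v := by
    intro v hv
    have hΨne : Ψ v ≠ 0 := (hΨpos v hv).ne'
    have hΛne : Λ v ≠ 0 := (hΛpos v hv).ne'
    have h1 : HasDerivAt (fun w => Real.log (Ψ w)) (deriv Ψ v / Ψ v) v :=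
      (hΨdiff v hv).hasDerivAt.log hΨne
    have h2 : HasDerivAt h
        ((deriv Ψ v / Ψ v * Λ v - Real.log (Ψ v) * deriv Λ v) / Λ v ^ 2) v :=
      h1.div (hΛdiff v hv).hasDerivAt hΛne
    convert h2 using 1
    simp only [hg_def, hf_def]
    field_simp
  -- derivative of -(Λ v)⁻¹
  have hφderiv : ∀ v : ℝ, 1 ≤ v → HasDerivAt (fun w => -(Λ w)⁻¹) (deriv Λ v / Λ v ^ 2) v := by
    intro v hv
    have hΛne : Λ v ≠ 0 := (hΛpos v hv).ne'
    have h0 : HasDerivAt (fun w => (Λ w)⁻¹) (-deriv Λ v / Λ v ^ 2) v :=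
      (hΛdiff v hv).hasDerivAt.inv hΛne
    have h1 : HasDerivAt (fun w => -(Λ w)⁻¹) (-(-deriv Λ v / Λ v ^ 2)) v := h0.neg
    convert h1 using 1
    ring
  -- measurability
  have hmf : AEStronglyMeasurable f (volume.restrict (Set.Ici 1)) := by
    have h1 : AEMeasurable (fun v => deriv Λ v * Real.log (Ψ v))
        (volume.restrict (Set.Ici 1)) :=
      (measurable_deriv Λ).aemeasurable.mul
        ((hΨcont.log fun v hv => (hΨpos v hv).ne').aemeasurable measurableSet_Ici)
    have h2 : AEMeasurable (fun v => (Λ v) ^ 2)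
        (volume.restrict (Set.Ici 1)) :=
      (hΛcont.pow 2).aemeasurable measurableSet_Ici
    exact (h1.div h2).aestronglyMeasurable
  have hmg : AEStronglyMeasurable g (volume.restrict (Set.Ici 1)) := by
    have h1 : AEMeasurable (fun v => deriv Ψ v)
        (volume.restrict (Set.Ici 1)) :=
      (measurable_deriv Ψ).aemeasurable
    have h2 : AEMeasurable (fun v => Ψ v * Λ v)
        (volume.restrict (Set.Ici 1)) :=
      (hΨcont.mul hΛcont).aemeasurable measurableSet_Ici
    exact (h1.div h2).aestronglyMeasurable
  have hmf' : ∀ A : ℝ, AEStronglyMeasurable f (volume.restrict (Set.Ioc 1 A)) := fun A =>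
    hmf.mono_set (fun x hx => le_of_lt hx.1)
  have hmg' : ∀ A : ℝ, AEStronglyMeasurable g (volume.restrict (Set.Ioc 1 A)) := fun A =>
    hmg.mono_set (fun x hx => le_of_lt hx.1)
  -- integrability of deriv Λ and deriv Ψ on finite intervals
  have hintΛ' : ∀ A : ℝ, IntegrableOn (deriv Λ) (Set.Ioc 1 A) := by
    intro A
    exact intervalIntegral.integrableOn_deriv_of_nonneg (hΛcont.mono fun x hx => hx.1)
      (fun x hx => (hΛdiff x hx.1.le).hasDerivAt) (fun x hx => hΛ'nn x hx.1)
  have hintΨ' : ∀ A : ℝ, IntegrableOn (deriv Ψ) (Set.Ioc 1 A) := by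
    intro A
    exact intervalIntegral.integrableOn_deriv_of_nonneg (hΨcont.mono fun x hx => hx.1)
      (fun x hx => (hΨdiff x hx.1.le).hasDerivAt) (fun x hx => hΨ'nn x hx.1)
  -- integrability of f and g on finite intervals
  have hfA : ∀ A : ℝ, IntegrableOn f (Set.Ioc 1 A) := by
    intro A
    rcases le_or_gt A 1 with hA | hA
    · rw [Set.Ioc_eq_empty (by exact fun hc => absurd hA (not_le.mpr hc))]
      exact integrableOn_empty
    refine Integrable.mono ((hintΛ' A).mul_const (Real.log (Ψ A))) (hmf' A) ?_
    rw [ae_restrict_iff' measurableSet_Ioc]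
    refine Eventually.of_forall fun v hv => ?_
    have h1v : (1:ℝ) < v := hv.1
    have hΛv := hΛ1 v h1v.le
    have hlogle : Real.log (Ψ v) ≤ Real.log (Ψ A) :=
      Real.log_le_log (hΨpos v h1v.le) (hΨmono h1v.le (h1v.le.trans hv.2) hv.2)
    have hden : (1:ℝ) ≤ Λ v ^ 2 := one_le_pow₀ hΛv
    rw [Real.norm_of_nonneg (hfnn v h1v)]
    have hfle : f v ≤ deriv Λ v * Real.log (Ψ A) := by
      have : f v ≤ deriv Λ v * Real.log (Ψ v) := by
        rw [hf_def]
        exact div_le_self (mul_nonneg (hΛ'nn v h1v) (hlogΨnn v h1v.le)) hden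
      exact this.trans (mul_le_mul_of_nonneg_left hlogle (hΛ'nn v h1v))
    calc f v ≤ deriv Λ v * Real.log (Ψ A) := hfle
      _ ≤ ‖deriv Λ v * Real.log (Ψ A)‖ := Real.le_norm_self _
  have hgA : ∀ A : ℝ, IntegrableOn g (Set.Ioc 1 A) := by
    intro A
    refine Integrable.mono (hintΨ' A) (hmg' A) ?_
    rw [ae_restrict_iff' measurableSet_Ioc]
    refine Eventually.of_forall fun v hv => ?_
    have h1v : (1:ℝ) < v := hv.1
    rw [Real.norm_of_nonneg (hgnn v h1v)]
    have hden : (1:ℝ) ≤ Ψ v * Λ v :=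
      one_le_mul_of_one_le_of_one_le (hΨ1 v h1v.le) (hΛ1 v h1v.le)
    calc g v ≤ deriv Ψ v := div_le_self (hΨ'nn v h1v) hden
      _ ≤ ‖deriv Ψ v‖ := Real.le_norm_self _
  -- key identity via FTC
  have hkey : ∀ A : ℝ, 1 ≤ A →
      (∫ v in Set.Ioc 1 A, g v) - ∫ v in Set.Ioc 1 A, f v = h A - h 1 := by
    intro A hA
    have hii : IntervalIntegrable (fun v => g v - f v) volume 1 A :=
      (intervalIntegrable_iff_integrableOn_Ioc_of_le hA).mpr ((hgA A).sub (hfA A))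
    have hftc := intervalIntegral.integral_eq_sub_of_hasDerivAt
      (f := h) (f' := fun v => g v - f v) (a := 1) (b := A)
      (fun x hx => hhderiv x (by
        rw [Set.uIcc_of_le hA] at hx
        exact hx.1)) hii
    rw [intervalIntegral.integral_of_le hA] at hftc
    rw [← hftc]
    exact (integral_sub (hgA A) (hfA A)).symm
  -- a.e. nonnegativity on `Ici 1`
  have hne1 : ∀ᵐ v : ℝ ∂(volume.restrict (Set.Ici 1)), v ≠ 1 := by
    refine ae_restrict_of_ae (ae_iff.mpr ?_)
    simpa using Real.volume_singleton (x := (1:ℝ))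
  have hmem : ∀ᵐ v : ℝ ∂(volume.restrict (Set.Ici 1)), v ∈ Set.Ici (1:ℝ) :=
    ae_restrict_mem measurableSet_Ici
  have haef : 0 ≤ᵐ[volume.restrict (Set.Ici 1)] f := by
    filter_upwards [hne1, hmem] with v hv hv1
    exact hfnn v (lt_of_le_of_ne hv1 (Ne.symm hv))
  have haeg : 0 ≤ᵐ[volume.restrict (Set.Ici 1)] g := by
    filter_upwards [hne1, hmem] with v hv hv1
    exact hgnn v (lt_of_le_of_ne hv1 (Ne.symm hv))
  constructor
  · -- f integrable → g integrable
    intro hf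
    set Cf : ℝ := ∫ v in Set.Ici 1, f v with hCf_def
    have hIocIci : ∀ A : ℝ, (∫ v in Set.Ioc 1 A, f v) ≤ Cf := fun A =>
      setIntegral_mono_set hf haef (HasSubset.Subset.eventuallyLE (fun x hx => le_of_lt hx.1))
    -- boundedness of h
    have hbd : ∀ A : ℝ, 1 ≤ A → h A ≤ Cf := by
      intro A hA
      have hIoc : ∀ B : ℝ, A ≤ B →
          Real.log (Ψ A) * ((Λ A)⁻¹ - (Λ B)⁻¹) ≤ Cf := by
        intro B hB
        have hintφ : IntegrableOn (fun v => deriv Λ v / Λ v ^ 2) (Set.Ioc A B) := by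
          refine intervalIntegral.integrableOn_deriv_of_nonneg (g := fun w => -(Λ w)⁻¹) ?_
            (fun x hx => hφderiv x (hA.trans hx.1.le)) ?_
          · exact ((hΛcont.mono fun x hx => hA.trans hx.1).inv₀
              fun x hx => (hΛpos x (hA.trans hx.1)).ne').neg
          · intro x hx
            have h1x : 1 < x := lt_of_le_of_lt hA hx.1
            exact div_nonneg (hΛ'nn x h1x) (by positivity)
        have hftcφ : (∫ v in Set.Ioc A B, deriv Λ v / Λ v ^ 2) = (Λ A)⁻¹ - (Λ B)⁻¹ := by
          have hii : IntervalIntegrable (fun v => deriv Λ v / Λ v ^ 2) volume A B :=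
            (intervalIntegrable_iff_integrableOn_Ioc_of_le hB).mpr hintφ
          have := intervalIntegral.integral_eq_sub_of_hasDerivAt
            (f := fun w => -(Λ w)⁻¹) (f' := fun v => deriv Λ v / Λ v ^ 2) (a := A) (b := B)
            (fun x hx => hφderiv x (by
              rw [Set.uIcc_of_le hB] at hx
              exact hA.trans hx.1)) hii
          rw [intervalIntegral.integral_of_le hB] at this
          rw [this]
          ring
        have hmono : Real.log (Ψ A) * ((Λ A)⁻¹ - (Λ B)⁻¹)
            ≤ ∫ v in Set.Ioc A B, f v := by
          rw [← hftcφ, ← integral_const_mul]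
          refine setIntegral_mono_on (hintφ.const_mul _)
            (hf.mono_set (fun x hx => hA.trans hx.1.le)) measurableSet_Ioc ?_
          intro x hx
          have h1x : 1 < x := lt_of_le_of_lt hA hx.1
          have hlog : Real.log (Ψ A) ≤ Real.log (Ψ x) :=
            Real.log_le_log (hΨpos A hA) (hΨmono hA (hA.trans hx.1.le) hx.1.le)
          have : Real.log (Ψ A) * (deriv Λ x / Λ x ^ 2)
              ≤ Real.log (Ψ x) * (deriv Λ x / Λ x ^ 2) :=
            mul_le_mul_of_nonneg_right hlog
              (div_nonneg (hΛ'nn x h1x) (by positivity))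
          calc Real.log (Ψ A) * (deriv Λ x / Λ x ^ 2)
              ≤ Real.log (Ψ x) * (deriv Λ x / Λ x ^ 2) := this
            _ = f x := by rw [hf_def]; ring
        refine hmono.trans ?_
        refine (setIntegral_mono_set hf haef ?_).trans ?_
        · exact HasSubset.Subset.eventuallyLE (fun x hx => hA.trans hx.1.le)
        · exact le_rfl
      -- take B → ∞
      have hlim : Tendsto (fun B => Real.log (Ψ A) * ((Λ A)⁻¹ - (Λ B)⁻¹)) atTop
          (nhds (Real.log (Ψ A) * ((Λ A)⁻¹ - 0))) := by
        exact (tendsto_const_nhds.sub hΛtop.inv_tendsto_atTop).const_mul _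
      have : Real.log (Ψ A) * ((Λ A)⁻¹ - 0) ≤ Cf := by
        refine le_of_tendsto hlim ?_
        filter_upwards [eventually_ge_atTop A] with B hB using hIoc B hB
      simpa [hh_def, div_eq_mul_inv] using this
    -- conclude g integrable
    rw [integrableOn_Ici_iff_integrableOn_Ioi]
    refine integrableOn_Ioi_of_intervalIntegral_norm_bounded (2 * Cf) 1 hgA tendsto_id ?_
    filter_upwards [eventually_ge_atTop (1:ℝ)] with A hA
    rw [intervalIntegral.integral_of_le hA]
    have hnorm : (∫ v in Set.Ioc 1 A, ‖g v‖) = ∫ v in Set.Ioc 1 A, g v := by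
      refine setIntegral_congr_fun measurableSet_Ioc fun v hv => ?_
      exact Real.norm_of_nonneg (hgnn v hv.1)
    rw [hnorm]
    have hid := hkey A hA
    have h1nn : 0 ≤ h 1 := hhnn 1 le_rfl
    have hAle : h A ≤ Cf := hbd A hA
    have hfle : (∫ v in Set.Ioc 1 A, f v) ≤ Cf := hIocIci A
    have hCfnn : 0 ≤ Cf := (hhnn A hA).trans hAle
    linarith [hid]
  · -- g integrable → f integrable
    intro hg
    set Cg : ℝ := ∫ v in Set.Ici 1, g v with hCg_def
    have hIocIci : ∀ A : ℝ, (∫ v in Set.Ioc 1 A, g v) ≤ Cg := fun A =>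
      setIntegral_mono_set hg haeg (HasSubset.Subset.eventuallyLE (fun x hx => le_of_lt hx.1))
    rw [integrableOn_Ici_iff_integrableOn_Ioi]
    refine integrableOn_Ioi_of_intervalIntegral_norm_bounded (Cg + h 1) 1 hfA tendsto_id ?_
    filter_upwards [eventually_ge_atTop (1:ℝ)] with A hA
    rw [intervalIntegral.integral_of_le hA]
    have hnorm : (∫ v in Set.Ioc 1 A, ‖f v‖) = ∫ v in Set.Ioc 1 A, f v := by
      refine setIntegral_congr_fun measurableSet_Ioc fun v hv => ?_
      exact Real.norm_of_nonneg (hfnn v hv.1)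
    rw [hnorm]
    have hid := hkey A hA
    have hAnn : 0 ≤ h A := hhnn A hA
    have hgle : (∫ v in Set.Ioc 1 A, g v) ≤ Cg := hIocIci A
    linarith [hid]
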